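/- Let L be a finite-dimensional Lie algebra over ℂ, b a solvable Lie subalgebra of L, M a nonzero Lie module over L, and V a nonzero finite-dimensional ℂ-subspace of M with b · V ⊆ V such that the smallest L-submodule of M containing V is M. Then there exist n ≥ 1 and a chain 0 = M₀ ≤ M₁ ≤ ⋯ ≤ Mₙ = M of L-submodules such that for each i the quotient Lie module M_i / M_{i−1} is nonzero and is generated as an L-module by a single vector v̄ satisfying x · v̄ ∈ ℂ • v̄ for all x ∈ b. -/

import Mathlib

open Module LinearMap

universe u v

/-- Core trace/invariance lemma. -/
lemma eigen_comm_vanish {W : Type*} [AddCommGroup W] [Module ℂ W] [FiniteDimensional ℂ W]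
    (X : Module.End ℂ W) (S : Set (Module.End ℂ W))
    (hS : ∀ A ∈ S, A * X - X * A ∈ S)
    (w₀ : W) (hw₀ : w₀ ≠ 0) (lam : Module.End ℂ W → ℂ)
    (hlam : ∀ A ∈ S, A w₀ = lam A • w₀) :
    ∀ A ∈ S, lam (A * X - X * A) = 0 := by
  set gen : ℕ → W := fun j => (X ^ j) w₀ with hgen
  set U : ℕ → Submodule ℂ W := fun i => Submodule.span ℂ (gen '' Set.Iio i) with hU
  have hUmono : Monotone U := by
    intro i j hij
    exact Submodule.span_mono (Set.image_mono (fun x hx => lt_of_lt_of_le hx hij))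
  have hgenU : ∀ j i, j < i → gen j ∈ U i := fun j i h =>
    Submodule.subset_span ⟨j, h, rfl⟩
  have hU0 : U 0 = ⊥ := by
    have : gen '' Set.Iio 0 = (∅ : Set W) := by
      ext x; simp
    simp [hU, this]
  have hX : ∀ i, ∀ u ∈ U i, X u ∈ U (i + 1) := by
    intro i u hu
    induction hu using Submodule.span_induction with
    | mem u hu =>
      obtain ⟨j, hj, rfl⟩ := hu
      rw [Set.mem_Iio] at hj
      have : X (gen j) = gen (j + 1) := by
        simp [hgen, pow_succ', Module.End.mul_apply]
      rw [this]
      exact hgenU _ _ (by omega)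
    | zero => simp
    | add u v _ _ hu hv => rw [map_add]; exact Submodule.add_mem _ hu hv
    | smul c u _ hu => rw [map_smul]; exact Submodule.smul_mem _ _ hu
  -- key claim C1
  have C1 : ∀ i, ∀ A ∈ S, A (gen i) - lam A • gen i ∈ U i := by
    intro i
    induction i with
    | zero =>
      intro A hA
      have : A (gen 0) - lam A • gen 0 = 0 := by
        simp [hgen, hlam A hA]
      rw [this]; exact Submodule.zero_mem _
    | succ i ih =>
      intro A hA
      have hA' : A * X - X * A ∈ S := hS A hA
      set u := gen i with hu
      have hXu : gen (i + 1) = X u := by simp [hgen, hu, pow_succ', Module.End.mul_apply]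
      have key : A (gen (i+1)) - lam A • gen (i+1) =
          X (A u - lam A • u) + ((A * X - X * A) u - lam (A * X - X * A) • u)
            + lam (A * X - X * A) • u := by
        rw [hXu]
        simp only [map_sub, map_smul, Module.End.mul_apply, LinearMap.sub_apply]
        abel
      rw [key]
      refine Submodule.add_mem _ (Submodule.add_mem _ ?_ ?_) ?_
      · exact hX i _ (ih A hA)
      · exact hUmono (Nat.le_succ i) (ih _ hA')
      · exact Submodule.smul_mem _ _ (hgenU _ _ (Nat.lt_succ_self i))
  have hAmaps : ∀ A ∈ S, ∀ i, ∀ u ∈ U i, A u ∈ U i := by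
    intro A hA i u hu
    induction hu using Submodule.span_induction with
    | mem u hu =>
      obtain ⟨j, hj, rfl⟩ := hu
      rw [Set.mem_Iio] at hj
      have : A (gen j) = (A (gen j) - lam A • gen j) + lam A • gen j := by abel
      rw [this]
      exact Submodule.add_mem _ (hUmono (le_of_lt hj) (C1 j A hA))
        (Submodule.smul_mem _ _ (hgenU _ _ hj))
    | zero => simp
    | add u v _ _ hu hv => rw [map_add]; exact Submodule.add_mem _ hu hv
    | smul c u _ hu => rw [map_smul]; exact Submodule.smul_mem _ _ hu
  have hNil : ∀ A ∈ S, ∀ i, ∀ u ∈ U i, (A - lam A • 1) u ∈ U (i - 1) := by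
    intro A hA i u hu
    induction hu using Submodule.span_induction with
    | mem u hu =>
      obtain ⟨j, hj, rfl⟩ := hu
      rw [Set.mem_Iio] at hj
      have : (A - lam A • 1) (gen j) = A (gen j) - lam A • gen j := by
        simp [LinearMap.sub_apply]
      rw [this]
      exact hUmono (by omega) (C1 j A hA)
    | zero => simp
    | add u v _ _ hu hv => rw [map_add]; exact Submodule.add_mem _ hu hv
    | smul c u _ hu => rw [map_smul]; exact Submodule.smul_mem _ _ hu
  have hNilPow : ∀ A ∈ S, ∀ k i, ∀ u ∈ U i, ((A - lam A • 1) ^ k) u ∈ U (i - k) := by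
    intro A hA k
    induction k with
    | zero => intro i u hu; simpa using hu
    | succ k ih =>
      intro i u hu
      have : ((A - lam A • 1) ^ (k+1)) u = ((A - lam A • 1) ^ k) ((A - lam A • 1) u) := by
        rw [pow_succ, Module.End.mul_apply]
      rw [this]
      have := ih (i - 1) _ (hNil A hA i u hu)
      rwa [show i - 1 - k = i - (k + 1) by omega] at this
  -- stabilization
  have : IsNoetherian ℂ W := inferInstance
  obtain ⟨n₀, hst⟩ := monotone_stabilizes_iff_noetherian.mpr inferInstance (⟨U, hUmono⟩ : ℕ →o Submodule ℂ W)
  set m := n₀ + 1 with hm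
  set P := U m with hP
  have hPeq : ∀ j, m ≤ j → U j = P := by
    intro j hj
    have h1 := hst j (by omega)
    have h2 := hst m (by omega)
    simp only [OrderHom.coe_mk] at h1 h2
    rw [hP, ← h1, ← h2]
  have hXP : ∀ u ∈ P, X u ∈ P := by
    intro u hu
    have := hX m u hu
    rwa [hPeq (m+1) (by omega)] at this
  have hw₀P : w₀ ∈ P := by
    have : gen 0 ∈ U 1 := hgenU 0 1 one_pos
    have h2 : gen 0 = w₀ := by simp [hgen]
    rw [← h2]
    exact hUmono (by omega) this
  have hPnt : Nontrivial P := ⟨⟨⟨w₀, hw₀P⟩, 0, by simp [hw₀]⟩⟩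
  have hfr : (finrank ℂ P : ℂ) ≠ 0 := by
    have := Module.finrank_pos (R := ℂ) (M := P)
    exact Nat.cast_ne_zero.mpr this.ne'
  -- trace formula
  have traceA : ∀ A ∈ S, ∀ (hAP : Set.MapsTo A P P),
      LinearMap.trace ℂ P (A.restrict hAP) = lam A * finrank ℂ P := by
    intro A hA hAP
    set NilA := A - lam A • (1 : Module.End ℂ W) with hNilA
    have hNP : ∀ u ∈ P, NilA u ∈ P := by
      intro u hu
      have h1 := hNil A hA m u hu
      exact hUmono (by omega) h1
    have hsplit : A.restrict hAP = NilA.restrict hNP + lam A • (1 : Module.End ℂ P) := by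
      ext u
      simp [hNilA, LinearMap.restrict_apply, LinearMap.restrict_coe_apply, LinearMap.sub_apply]
      rfl
    rw [hsplit, map_add]
    have hnil0 : LinearMap.trace ℂ P (NilA.restrict hNP) = 0 := by
      have hpow : (NilA.restrict hNP) ^ m = 0 := by
        rw [Module.End.pow_restrict]
        ext u
        have : (NilA ^ m) (u : W) ∈ U (m - m) := hNilPow A hA m m u u.2
        rw [Nat.sub_self, hU0] at this
        simpa [LinearMap.restrict_apply] using this
      have : IsNilpotent (LinearMap.trace ℂ P (NilA.restrict hNP)) :=
        LinearMap.isNilpotent_trace_of_isNilpotent ⟨m, hpow⟩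
      exact this.eq_zero
    rw [hnil0, zero_add, map_smul, LinearMap.trace_one]
    simp [mul_comm]
  -- conclude
  intro A hA
  have hA' : A * X - X * A ∈ S := hS A hA
  have hAP : Set.MapsTo A P P := fun u hu => hAmaps A hA m u hu
  have hA'P : Set.MapsTo (A * X - X * A) P P := fun u hu => hAmaps _ hA' m u hu
  have hXPm : Set.MapsTo X P P := hXP
  have hcomm : (A * X - X * A).restrict hA'P =
      A.restrict hAP * X.restrict hXPm - X.restrict hXPm * A.restrict hAP := by
    ext u
    simp [LinearMap.restrict_apply, LinearMap.restrict_coe_apply, Module.End.mul_apply, LinearMap.sub_apply]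
    rfl
  have h1 := traceA _ hA' hA'P
  rw [hcomm, map_sub, LinearMap.trace_mul_comm, sub_self] at h1
  exact (mul_eq_zero.mp h1.symm).resolve_right hfr
/-- Lie's theorem, eigenvalue-per-element form. -/
lemma lie_theorem_aux : ∀ (n : ℕ) (B : Type u) [inst1 : LieRing B] [inst2 : LieAlgebra ℂ B]
    [inst3 : FiniteDimensional ℂ B] [inst4 : LieAlgebra.IsSolvable B]
    (W : Type v) [inst5 : AddCommGroup W] [inst6 : Module ℂ W] [inst7 : LieRingModule B W]
    [inst8 : LieModule ℂ B W] [inst9 : FiniteDimensional ℂ W] [inst10 : Nontrivial W],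
    finrank ℂ B ≤ n → ∃ w : W, w ≠ 0 ∧ ∀ x : B, ∃ c : ℂ, ⁅x, w⁆ = c • w := by
  intro n
  induction n with
  | zero =>
    intro B _ _ _ _ W _ _ _ _ _ _ hn
    have : Subsingleton B := finrank_zero_iff.mp (Nat.le_zero.mp hn)
    obtain ⟨w, hw⟩ := exists_ne (0 : W)
    refine ⟨w, hw, fun x => ⟨0, ?_⟩⟩
    rw [Subsingleton.elim x 0, zero_lie, zero_smul]
  | succ n ih =>
    intro B _ _ _ _ W _ _ _ _ _ _ hn
    classical
    by_cases hle : finrank ℂ B ≤ n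
    · exact ih B W hle
    have hfr : finrank ℂ B = n + 1 := le_antisymm hn (by omega)
    have hBnt : Nontrivial B := by
      exact Module.nontrivial_of_finrank_pos (R := ℂ) (by omega)
    -- derived series ideal
    set D := LieAlgebra.derivedSeries ℂ B 1 with hD
    have hDlt : D < ⊤ := LieAlgebra.derivedSeries_lt_top_of_solvable ℂ B
    obtain ⟨z₀, -, hz₀'⟩ := SetLike.exists_of_lt hDlt
    have hz₀ : z₀ ∉ (D : Submodule ℂ B) := fun h => hz₀' h
    obtain ⟨ψ, hψz₀, hψD⟩ := Submodule.exists_dual_map_eq_bot_of_notMem hz₀ inferInstance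
    have hψ0 : ∀ y ∈ (D : Submodule ℂ B), ψ y = 0 := by
      intro y hy
      have : ψ y ∈ Submodule.map ψ (D : Submodule ℂ B) := Submodule.mem_map_of_mem hy
      rwa [hψD, Submodule.mem_bot] at this
    set φ : B →ₗ[ℂ] ℂ := (ψ z₀)⁻¹ • ψ with hφ
    have hφD : ∀ y ∈ (D : Submodule ℂ B), φ y = 0 := by
      intro y hy; simp [hφ, hψ0 y hy]
    have hφz₀ : φ z₀ = 1 := by simp [hφ, inv_mul_cancel₀ hψz₀]
    -- bracket lands in D
    have hlieD : ∀ x y : B, ⁅x, y⁆ ∈ (D : Submodule ℂ B) := by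
      intro x y
      have : ⁅x, y⁆ ∈ D := by
        rw [hD]
        exact LieSubmodule.lie_mem_lie (LieSubmodule.mem_top x) (LieSubmodule.mem_top y)
      exact this
    -- the codimension-one ideal
    set 𝔞 : LieSubalgebra ℂ B :=
      { toSubmodule := LinearMap.ker φ
        lie_mem' := fun {x y} _ _ => by
          exact hφD _ (hlieD x y) } with h𝔞
    have hmem𝔞 : ∀ x : B, x ∈ 𝔞 ↔ φ x = 0 := fun x => Iff.rfl
    have h𝔞sol : LieAlgebra.IsSolvable ↥𝔞 :=
      Function.Injective.lieAlgebra_isSolvable (f := 𝔞.incl) Subtype.coe_injective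
    have h𝔞fr : finrank ℂ ↥𝔞 ≤ n := by
      have h1 := LinearMap.finrank_range_add_finrank_ker φ
      have h2 : finrank ℂ (LinearMap.range φ) ≤ 1 := by
        simpa using Submodule.finrank_le (LinearMap.range φ)
      have h3 : finrank ℂ (LinearMap.range φ) ≠ 0 := by
        intro h0
        rw [Submodule.finrank_eq_zero] at h0
        have : φ z₀ ∈ LinearMap.range φ := LinearMap.mem_range_self φ z₀
        rw [h0, Submodule.mem_bot, hφz₀] at this
        exact one_ne_zero this
      have : finrank ℂ ↥(LinearMap.ker φ) = n := by omega
      rw [show finrank ℂ ↥𝔞 = finrank ℂ ↥(LinearMap.ker φ) from rfl, this]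
    -- apply induction hypothesis to 𝔞 acting on W
    obtain ⟨w₀, hw₀, hw₀eig⟩ := ih ↥𝔞 W h𝔞fr
    -- set up the vanishing lemma
    set toE : B → Module.End ℂ W := fun x => LieModule.toEnd ℂ B W x with htoE
    set lam : Module.End ℂ W → ℂ := fun E =>
      if h : ∃ c : ℂ, E w₀ = c • w₀ then h.choose else 0 with hlam'
    set S : Set (Module.End ℂ W) := toE '' {x : B | x ∈ 𝔞} with hS'
    have hlamspec : ∀ E ∈ S, E w₀ = lam E • w₀ := by
      rintro E ⟨x, hx, rfl⟩
      obtain ⟨c, hc⟩ := hw₀eig ⟨x, hx⟩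
      have hex : ∃ c : ℂ, toE x w₀ = c • w₀ := by
        refine ⟨c, ?_⟩
        rw [htoE]
        simpa [LieModule.toEnd_apply_apply, LieSubalgebra.coe_bracket_of_module] using hc
      simp only [hlam', dif_pos hex]
      exact hex.choose_spec
    -- pick z with φ z = 1
    set z : B := z₀ with hz
    set X : Module.End ℂ W := toE z with hX
    have hScomm : ∀ y : B, ∀ A ∈ S, A * toE y - toE y * A ∈ S := by
      rintro y A ⟨a, ha, rfl⟩
      refine ⟨⁅a, y⁆, hφD _ (hlieD a y), ?_⟩
      rw [htoE]
      simp only [LieHom.map_lie]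
      rw [Ring.lie_def]
    have hvanish : ∀ y : B, ∀ A ∈ S, lam (A * toE y - toE y * A) = 0 :=
      fun y => eigen_comm_vanish (toE y) S (hScomm y) w₀ hw₀ lam hlamspec
    -- eigenvalue function on 𝔞
    have heig : ∀ a : B, a ∈ 𝔞 → ∀ u : W, (∀ E ∈ S, E u = lam E • u) → True := fun _ _ _ _ => trivial
    -- the common eigenspace
    set Wl : Submodule ℂ W :=
      { carrier := {u : W | ∀ E ∈ S, E u = lam E • u}
        add_mem' := fun {u v} hu hv E hE => by
          rw [map_add, hu E hE, hv E hE, smul_add]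
        zero_mem' := fun E _ => by rw [map_zero, smul_zero]
        smul_mem' := fun c u hu E hE => by
          rw [map_smul, hu E hE, smul_comm] } with hWl
    have hw₀Wl : w₀ ∈ Wl := fun E hE => hlamspec E hE
    -- invariance of Wl under all of B
    have hWlinv : ∀ x : B, ∀ u ∈ Wl, toE x u ∈ Wl := by
      intro x u hu
      rintro E ⟨a, ha, rfl⟩
      -- ⁅a, x·u⁆ = ⁅⁅a,x⁆,u⁆ + x·⁅a,u⁆
      have hb : toE ⁅a, x⁆ = toE a * toE x - toE x * toE a := by
        rw [htoE]; simp only [LieHom.map_lie]; rw [Ring.lie_def]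
      have haxS : toE ⁅a, x⁆ ∈ S := ⟨⁅a, x⁆, hφD _ (hlieD a x), rfl⟩
      have hv : lam (toE a * toE x - toE x * toE a) = 0 :=
        hvanish x (toE a) ⟨a, ha, rfl⟩
      have h1 : toE ⁅a, x⁆ u = lam (toE ⁅a, x⁆) • u := hu _ haxS
      have h2 : lam (toE ⁅a, x⁆) = 0 := by rw [hb]; exact hv
      have h3 : toE a (toE x u) = toE x (toE a u) + toE ⁅a, x⁆ u := by
        rw [hb]
        simp [LinearMap.sub_apply, Module.End.mul_apply]
      rw [h3, h1, h2, zero_smul, add_zero, hu _ ⟨a, ha, rfl⟩, map_smul]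
    -- finite-dimensional nontrivial, take an eigenvector of z
    have hWlnt : Nontrivial ↥Wl := ⟨⟨⟨w₀, hw₀Wl⟩, 0, by simp [hw₀]⟩⟩
    have hXWl : ∀ u ∈ Wl, X u ∈ Wl := fun u hu => hWlinv z u hu
    set Z : Module.End ℂ ↥Wl := X.restrict hXWl with hZ
    obtain ⟨μ, hμ⟩ := Module.End.exists_eigenvalue Z
    obtain ⟨w, hwvec⟩ := hμ.exists_hasEigenvector
    refine ⟨(w : W), by simpa using hwvec.right, ?_⟩
    intro x
    -- decompose x = (x - φ x • z) + φ x • z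
    set a : B := x - φ x • z with ha
    have haφ : a ∈ 𝔞 := by
      rw [hmem𝔞, ha, map_sub, map_smul, hφz₀]
      simp
    have haS : toE a ∈ S := ⟨a, haφ, rfl⟩
    have h1 : toE a (w : W) = lam (toE a) • (w : W) := w.2 _ haS
    have h2 : X (w : W) = μ • (w : W) := by
      have := hwvec.apply_eq_smul
      calc X (w : W) = ((Z w : ↥Wl) : W) := rfl
        _ = μ • (w : W) := by rw [this]; rfl
    refine ⟨lam (toE a) + φ x * μ, ?_⟩
    have hbr : ⁅x, (w : W)⁆ = toE x (w : W) := rfl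
    have hsplit : toE x (w : W) = toE a (w : W) + φ x • X (w : W) := by
      have : toE a = toE x - φ x • toE z := by
        rw [htoE, ha]; simp [map_sub, map_smul]
      rw [this]
      simp [LinearMap.sub_apply, LinearMap.smul_apply, hX]
    rw [hbr, hsplit, h1, h2, smul_smul, add_smul]
section Step

variable {L : Type*} [LieRing L] [LieAlgebra ℂ L] [FiniteDimensional ℂ L]
    {b : LieSubalgebra ℂ L} (hb : LieAlgebra.IsSolvable b)
    {M : Type*} [AddCommGroup M] [Module ℂ M] [LieRingModule L M] [LieModule ℂ L M]
    {V : Submodule ℂ M} (hVfd : FiniteDimensional ℂ V)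
    (hbV : ∀ x ∈ b, ∀ v ∈ V, ⁅x, v⁆ ∈ V)
    (hgen : LieSubmodule.lieSpan ℂ L (V : Set M) = ⊤)

include hb hVfd hbV hgen in
/-- One step: find a `b`-eigenvector mod `N` inside `V`. -/
lemma exists_eigenvector_step (N : LieSubmodule ℂ L M) (hN : N ≠ ⊤) :
    ∃ v : M, v ∈ V ∧ v ∉ N ∧ ∀ x : b, ∃ c : ℂ, ⁅(x : L), v⁆ - c • v ∈ N := by
  classical
  have hVN : ¬(V : Set M) ⊆ N := by
    intro h
    exact hN (top_le_iff.mp (hgen ▸ LieSubmodule.lieSpan_le.mpr h))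
  obtain ⟨v₀, hv₀V, hv₀N⟩ : ∃ v₀, v₀ ∈ V ∧ v₀ ∉ N := by
    simpa [Set.subset_def] using hVN
  set Q := M ⧸ N
  set π : M →ₗ⁅ℂ,L⁆ Q := LieSubmodule.Quotient.mk' N with hπ
  set W : Submodule ℂ Q := Submodule.map (π : M →ₗ[ℂ] Q) V with hW
  -- W is a b-submodule of Q
  have hWlie : ∀ (x : ↥b) (m : Q), m ∈ W → ⁅x, m⁆ ∈ W := by
    rintro x m ⟨v, hv, rfl⟩
    refine ⟨⁅(x : L), v⁆, hbV x x.2 v hv, ?_⟩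
    have : π ⁅(x : L), v⁆ = ⁅(x : L), π v⁆ := (LieModuleHom.map_lie π (x : L) v)
    rw [LieSubalgebra.coe_bracket_of_module]
    exact this
  set W' : LieSubmodule ℂ ↥b Q :=
    { toSubmodule := W
      lie_mem := fun {x m} hm => hWlie x m hm } with hW'
  haveI : FiniteDimensional ℂ V := hVfd
  haveI : FiniteDimensional ℂ W := Module.Finite.map V (π : M →ₗ[ℂ] Q)
  haveI : FiniteDimensional ℂ W' := by
    show FiniteDimensional ℂ W
    infer_instance
  haveI : Nontrivial ↥W' := by
    refine ⟨⟨⟨π v₀, ⟨v₀, hv₀V, rfl⟩⟩, 0, ?_⟩⟩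
    intro h
    apply hv₀N
    have : π v₀ = 0 := by simpa using congrArg Subtype.val h
    exact (LieSubmodule.Quotient.mk_eq_zero N).mp this
  haveI := hb
  obtain ⟨w, hw0, hweig⟩ := lie_theorem_aux (finrank ℂ ↥b) ↥b ↥W' le_rfl
  obtain ⟨v, hvV, hvw⟩ : ∃ v, v ∈ V ∧ π v = (w : Q) := w.2
  refine ⟨v, hvV, ?_, ?_⟩
  · intro hvN
    apply hw0
    have : π v = 0 := (LieSubmodule.Quotient.mk_eq_zero N).mpr hvN
    ext
    rw [← hvw]
    simpa using this
  · intro x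
    obtain ⟨c, hc⟩ := hweig x
    refine ⟨c, ?_⟩
    have hcoe : ⁅x, (w : Q)⁆ = c • (w : Q) := by
      have := congrArg Subtype.val hc
      simpa using this
    rw [LieSubalgebra.coe_bracket_of_module] at hcoe
    have : π (⁅(x : L), v⁆ - c • v) = 0 := by
      rw [map_sub, map_smul, LieModuleHom.map_lie, hvw, hcoe, sub_self]
    exact (LieSubmodule.Quotient.mk_eq_zero N).mp this


include hb hVfd hbV hgen in

lemma filtration_rec : ∀ (k : ℕ) (N : LieSubmodule ℂ L M),
    finrank ℂ V - finrank ℂ ↥(V ⊓ (N : Submodule ℂ M)) ≤ k →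
    ∃ n : ℕ, ∃ f : ℕ → LieSubmodule ℂ L M,
      f 0 = N ∧ f n = ⊤ ∧ (∀ i < n, f i ≤ f (i + 1)) ∧
      ∀ i < n, ∃ v : M, v ∈ f (i + 1) ∧ v ∉ f i ∧
        f (i + 1) = f i ⊔ LieSubmodule.lieSpan ℂ L {v} ∧
        ∀ x : b, ∃ c : ℂ, ⁅(x : L), v⁆ - c • v ∈ f i := by
  intro k
  induction k with
  | zero =>
    intro N hk
    by_cases hN : N = ⊤
    · exact ⟨0, fun _ => N, rfl, by rw [hN], fun i hi => absurd hi (by omega),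
        fun i hi => absurd hi (by omega)⟩
    · exfalso
      haveI := hVfd
      haveI : FiniteDimensional ℂ ↥(V ⊓ (N : Submodule ℂ M)) :=
        Submodule.finiteDimensional_of_le inf_le_left
      have h1 : finrank ℂ ↥(V ⊓ (N : Submodule ℂ M)) ≤ finrank ℂ V :=
        Submodule.finrank_mono inf_le_left
      have h2 : finrank ℂ V ≤ finrank ℂ ↥(V ⊓ (N : Submodule ℂ M)) := by omega
      have heq : V ⊓ (N : Submodule ℂ M) = V := by
        apply Submodule.eq_of_le_of_finrank_le inf_le_left
        exact h2
      have hVle : (V : Set M) ⊆ N := by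
        intro v hv
        have : v ∈ V ⊓ (N : Submodule ℂ M) := by rw [heq]; exact hv
        exact this.2
      exact hN (top_le_iff.mp (hgen ▸ LieSubmodule.lieSpan_le.mpr hVle))
  | succ k ih =>
    intro N hk
    by_cases hN : N = ⊤
    · exact ⟨0, fun _ => N, rfl, by rw [hN], fun i hi => absurd hi (by omega),
        fun i hi => absurd hi (by omega)⟩
    obtain ⟨v, hvV, hvN, hveig⟩ := exists_eigenvector_step hb hVfd hbV hgen N hN
    set N' : LieSubmodule ℂ L M := N ⊔ LieSubmodule.lieSpan ℂ L {v} with hN'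
    have hNle : N ≤ N' := le_sup_left
    have hvN' : v ∈ N' := by
      apply (le_sup_right : LieSubmodule.lieSpan ℂ L {v} ≤ N')
      exact LieSubmodule.subset_lieSpan rfl
    -- rank bookkeeping
    haveI := hVfd
    haveI : FiniteDimensional ℂ ↥(V ⊓ (N' : Submodule ℂ M)) :=
      Submodule.finiteDimensional_of_le inf_le_left
    haveI : FiniteDimensional ℂ ↥(V ⊓ (N : Submodule ℂ M)) :=
      Submodule.finiteDimensional_of_le inf_le_left
    have hlt : V ⊓ (N : Submodule ℂ M) < V ⊓ (N' : Submodule ℂ M) := by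
      refine lt_of_le_of_ne (inf_le_inf_left _ ?_) ?_
      · exact_mod_cast hNle
      · intro h
        apply hvN
        have : v ∈ V ⊓ (N' : Submodule ℂ M) := ⟨hvV, hvN'⟩
        rw [← h] at this
        exact this.2
    have hrlt : finrank ℂ ↥(V ⊓ (N : Submodule ℂ M)) < finrank ℂ ↥(V ⊓ (N' : Submodule ℂ M)) :=
      Submodule.finrank_lt_finrank_of_lt hlt
    have hrle : finrank ℂ ↥(V ⊓ (N' : Submodule ℂ M)) ≤ finrank ℂ V :=
      Submodule.finrank_mono inf_le_left
    obtain ⟨n', f', hf0, hftop, hfchain, hfstep⟩ := ih N' (by omega)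
    refine ⟨n' + 1, fun i => if i = 0 then N else f' (i - 1), by simp, by simp [hftop], ?_, ?_⟩
    · intro i hi
      match i with
      | 0 => simpa [hf0] using hNle
      | (j + 1) =>
        simpa using hfchain j (by omega)
    · intro i hi
      match i with
      | 0 =>
        refine ⟨v, ?_, by simpa using hvN, by simpa [hf0] using hN', fun x => ?_⟩
        · simpa [hf0] using hvN'
        · obtain ⟨c, hc⟩ := hveig x
          exact ⟨c, by simpa using hc⟩
      | (j + 1) =>
        obtain ⟨w, h1, h2, h3, h4⟩ := hfstep j (by omega)
        exact ⟨w, by simpa using h1, by simpa using h2, by simpa using h3,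
          fun x => by obtain ⟨c, hc⟩ := h4 x; exact ⟨c, by simpa using hc⟩⟩


end Step

/-- A nonzero Lie module over a finite-dimensional complex Lie algebra,
generated by a nonzero finite-dimensional subspace stable under a solvable subalgebra `b`,
admits a finite filtration by `L`-submodules whose successive quotients are nonzero highest
weight modules: each step is obtained by adjoining a vector that is a common `b`-eigenvector
modulo the previous step. -/
theorem filtration_by_highest_weight_modules
    (L : Type*) [LieRing L] [LieAlgebra ℂ L] [FiniteDimensional ℂ L]
    (b : LieSubalgebra ℂ L) (hb : LieAlgebra.IsSolvable b)
    (M : Type*) [AddCommGroup M] [Module ℂ M] [LieRingModule L M] [LieModule ℂ L M]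
    [Nontrivial M]
    (V : Submodule ℂ M) (hVne : V ≠ ⊥) (hVfd : FiniteDimensional ℂ V)
    (hbV : ∀ x ∈ b, ∀ v ∈ V, ⁅x, v⁆ ∈ V)
    (hgen : LieSubmodule.lieSpan ℂ L (V : Set M) = ⊤) :
    ∃ n : ℕ, 1 ≤ n ∧ ∃ f : ℕ → LieSubmodule ℂ L M,
      f 0 = ⊥ ∧ f n = ⊤ ∧ (∀ i < n, f i ≤ f (i + 1)) ∧
      ∀ i < n, ∃ v : M, v ∈ f (i + 1) ∧ v ∉ f i ∧
        f (i + 1) = f i ⊔ LieSubmodule.lieSpan ℂ L {v} ∧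
        ∀ x : b, ∃ c : ℂ, ⁅(x : L), v⁆ - c • v ∈ f i := by
  obtain ⟨n, f, hf0, hftop, hchain, hstep⟩ :=
    filtration_rec hb hVfd hbV hgen (finrank ℂ V) (⊥ : LieSubmodule ℂ L M) (by omega)
  refine ⟨n, ?_, f, hf0, hftop, hchain, hstep⟩
  by_contra h
  have hn0 : n = 0 := by omega
  rw [hn0, hf0] at hftop
  obtain ⟨m, hm⟩ := exists_ne (0 : M)
  apply hm
  have : m ∈ (⊥ : LieSubmodule ℂ L M) := hftop ▸ LieSubmodule.mem_top m
  simpa [LieSubmodule.mem_bot] using this
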